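/- arXiv:1504.03391 — 3 statements merged into one kernel-verified Lean document; each statement's English description precedes it below -/
import Mathlib

section
/- Let m be a positive integer and let C ⊆ {0,1}^m be a set of points such that any two distinct points of C are at Hamming distance at least 3. Let g : C → {0,1} be arbitrary and define f : {0,1}^m → [0,1] by f(y) = g(y) if y ∈ C and f(y) = 1 otherwise. Then f is self-bounding: for every y ∈ {0,1}^m, Σ_{i=1}^m max{ f(y) − f(y ⊕ e_i), 0 } ≤ f(y), where y ⊕ e_i denotes y with its i-th bit flipped. -/
open Finset

noncomputable section

/-- The real value (0 or 1) of a Boolean coordinate. -/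
def bval (b : Bool) : ℝ := if b then 1 else 0

/-- Expectation over the uniform distribution on `{0,1}^n`. -/
def EU {n : ℕ} (g : (Fin n → Bool) → ℝ) : ℝ :=
  (∑ x : Fin n → Bool, g x) / 2 ^ n

/-- `ℓ₂` norm with respect to the uniform distribution. -/
def l2norm {n : ℕ} (g : (Fin n → Bool) → ℝ) : ℝ :=
  Real.sqrt (EU (fun x => g x ^ 2))

/-- `ℓ₁` norm with respect to the uniform distribution. -/
def l1norm {n : ℕ} (g : (Fin n → Bool) → ℝ) : ℝ :=
  EU (fun x => |g x|)

/-- Discrete partial derivative `∂_i f`. -/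
def d1 {n : ℕ} (f : (Fin n → Bool) → ℝ) (i : Fin n) (x : Fin n → Bool) : ℝ :=
  f (Function.update x i true) - f (Function.update x i false)

/-- Second-order discrete derivative `∂_{ij} f`, with `∂_{ii} f ≡ 0`. -/
def d2 {n : ℕ} (f : (Fin n → Bool) → ℝ) (i j : Fin n) (x : Fin n → Bool) : ℝ :=
  if i = j then 0 else
    f (Function.update (Function.update x i true) j true)
      - f (Function.update (Function.update x i true) j false)
      - f (Function.update (Function.update x i false) j true)
      + f (Function.update (Function.update x i false) j false)

/-- The parity (character) `χ_S(x) = (-1)^{Σ_{i∈S} x_i}`. -/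
def chi {n : ℕ} (S : Finset (Fin n)) (x : Fin n → Bool) : ℝ :=
  ∏ i ∈ S, (if x i then (-1 : ℝ) else 1)

/-- The Fourier coefficient `f̂(S) = E_{x∼U}[f(x) χ_S(x)]`. -/
def fcoeff {n : ℕ} (f : (Fin n → Bool) → ℝ) (S : Finset (Fin n)) : ℝ :=
  EU (fun x => f x * chi S x)

/-- Submodularity of a function on the Boolean cube. -/
def Submodular {n : ℕ} (f : (Fin n → Bool) → ℝ) : Prop :=
  ∀ x y, f (x ⊔ y) + f (x ⊓ y) ≤ f x + f y

/-- `f` is XOS: a maximum of finitely many nonnegative linear functions. -/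
def IsXOS {n : ℕ} (f : (Fin n → Bool) → ℝ) : Prop :=
  ∃ (m : ℕ) (w : Fin (m + 1) → Fin n → ℝ),
    (∀ c i, 0 ≤ w c i) ∧
    ∀ x, f x = Finset.univ.sup' Finset.univ_nonempty
      (fun c => ∑ i, w c i * bval (x i))

open Classical in
/-- Probability of an event under the uniform distribution on `{0,1}^n`. -/
def PrU {n : ℕ} (P : (Fin n → Bool) → Prop) : ℝ :=
  EU (fun x => if P x then 1 else 0)

/-- The threshold norm `‖h‖_T = sup{α ≥ 0 : Pr[|h(x)| ≥ α] ≥ α³}`. -/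
def tnorm {n : ℕ} (h : (Fin n → Bool) → ℝ) : ℝ :=
  sSup {α : ℝ | 0 ≤ α ∧ α ^ 3 ≤ PrU (fun x => α ≤ |h x|)}

end

/-- Let C ⊆ {0,1}^m have pairwise Hamming distance at least 3,
g : C → {0,1} arbitrary, and f = g on C, f = 1 off C. Then f is self-bounding:
Σ_i max{f(y) − f(y ⊕ e_i), 0} ≤ f(y) for all y. -/
theorem stmt17 (m : ℕ) (hm : 0 < m) (C : Finset (Fin m → Bool))
    (hC : ∀ y ∈ C, ∀ z ∈ C, y ≠ z → 3 ≤ hammingDist y z)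
    (g : (Fin m → Bool) → Bool)
    (f : (Fin m → Bool) → ℝ)
    (hf : ∀ y, f y = if y ∈ C then (if g y then (1 : ℝ) else 0) else 1) :
    ∀ y : Fin m → Bool,
      ∑ i : Fin m, max (f y - f (Function.update y i (!(y i)))) 0 ≤ f y := by
  intro y
  have hfle : ∀ z, f z ≤ 1 := by intro z; rw [hf]; split_ifs <;> norm_num
  have hfge : ∀ z, 0 ≤ f z := by intro z; rw [hf]; split_ifs <;> norm_num
  have hne : ∀ i : Fin m, Function.update y i (!(y i)) ≠ y := by
    intro i h
    have := congrFun h i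
    simp at this
  have hd1 : ∀ i : Fin m, hammingDist (Function.update y i (!(y i))) y = 1 := by
    intro i
    rw [hammingDist]
    rw [show (Finset.univ.filter fun j => Function.update y i (!(y i)) j ≠ y j) = {i} from ?_]
    · simp
    · ext j
      rcases eq_or_ne j i with rfl | h <;> simp [Function.update, *]
  by_cases hy : y ∈ C
  · -- all flips are outside C, so f(flip) = 1 and each term is 0
    have hflip : ∀ i : Fin m, f (Function.update y i (!(y i))) = 1 := by
      intro i
      have hnotC : Function.update y i (!(y i)) ∉ C := by
        intro h
        have := hC _ h _ hy (hne i)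
        rw [hd1 i] at this
        omega
      rw [hf]; simp [hnotC]
    have : ∀ i : Fin m, max (f y - f (Function.update y i (!(y i)))) 0 = 0 := by
      intro i
      rw [hflip i, max_eq_right (by linarith [hfle y])]
    simp only [this, Finset.sum_const_zero]
    exact hfge y
  · have hfy : f y = 1 := by rw [hf]; simp [hy]
    -- at most one flip lands in C
    have hterm : ∀ i : Fin m, max (f y - f (Function.update y i (!(y i)))) 0
        = if f (Function.update y i (!(y i))) = 0 then 1 else 0 := by
      intro i
      rcases (by rw [hf]; split_ifs <;> norm_num :
          f (Function.update y i (!(y i))) = 0 ∨ f (Function.update y i (!(y i))) = 1) with h | h <;>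
        simp [h, hfy]
    rw [Finset.sum_congr rfl fun i _ => hterm i]
    rw [Finset.sum_boole]
    simp only [Finset.sum_const, nsmul_eq_mul, mul_one, hfy]
    have hcard : (Finset.univ.filter fun i : Fin m =>
        f (Function.update y i (!(y i))) = 0).card ≤ 1 := by
      refine Finset.card_le_one.2 fun i hi j hj => ?_
      simp only [Finset.mem_filter] at hi hj
      have hiC : Function.update y i (!(y i)) ∈ C := by
        by_contra h
        rw [hf] at hi; simp [h] at hi
      have hjC : Function.update y j (!(y j)) ∈ C := by
        by_contra h
        rw [hf] at hj; simp [h] at hj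
      by_contra hij
      have hne2 : Function.update y i (!(y i)) ≠ Function.update y j (!(y j)) := by
        intro h
        have := congrFun h i
        simp [Function.update, Ne.symm hij, hij] at this
      have h3 := hC _ hiC _ hjC hne2
      have htri := hammingDist_triangle (Function.update y i (!(y i))) y
        (Function.update y j (!(y j)))
      rw [hd1 i, hammingDist_comm y (Function.update y j (!(y j))), hd1 j] at htri
      omega
    exact_mod_cast hcard
end

section
/- Let V ⊆ ℝⁿ be a nonempty compact set and define φ : 2^{[n]} → ℝ by φ(A) = E_{σ}[ max_{v∈V} Σ_{i∈A} σ_i v_i ], where σ is uniform over {−1,1}^A (and φ(∅) = 0). Then φ(∅) = 0, φ is monotone (φ(A) ≤ φ(A') whenever A ⊆ A'), and φ is fractionally subadditive: φ(A) ≤ Σ_{j=1}^m β_j φ(B_j) whenever β_j ≥ 0 and Σ_{j : i ∈ B_j} β_j ≥ 1 for every i ∈ A. Consequently φ is an XOS function. -/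
open Finset

/-- The real sign ±1 of a Boolean. -/
def sgn (b : Bool) : ℝ := if b then 1 else -1

/-- The (unnormalized) Rademacher complexity of V ⊆ ℝⁿ restricted to the
coordinates in A: φ(A) = E_{σ ∼ {−1,1}^A}[ sup_{v∈V} Σ_{i∈A} σ_i v_i ]. -/
noncomputable def radSet {n : ℕ} (V : Set (Fin n → ℝ)) (A : Finset (Fin n)) : ℝ :=
  (∑ σ : {i // i ∈ A} → Bool,
      sSup ((fun v : Fin n → ℝ => ∑ i ∈ A.attach, sgn (σ i) * v i.1) '' V)) / 2 ^ A.card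


section Aux18

variable {n : ℕ} {V : Set (Fin n → ℝ)}

/-- The linear functional `v ↦ Σ_{i∈A} sgn(σ i) v i`. -/
noncomputable def linA (A : Finset (Fin n)) (σ : Fin n → Bool) (v : Fin n → ℝ) : ℝ :=
  ∑ i ∈ A, sgn (σ i) * v i

/-- The sup of `linA A σ` over `V`. -/
noncomputable def GA (V : Set (Fin n → ℝ)) (A : Finset (Fin n)) (σ : Fin n → Bool) : ℝ :=
  sSup (linA A σ '' V)

lemma linA_cont (A : Finset (Fin n)) (σ : Fin n → Bool) : Continuous (linA A σ) := by
  unfold linA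
  exact continuous_finset_sum _ fun i _ => continuous_const.mul (continuous_apply i)

lemma exists_maxA (hne : V.Nonempty) (hcomp : IsCompact V) (A : Finset (Fin n))
    (σ : Fin n → Bool) : ∃ v ∈ V, IsMaxOn (linA A σ) V v :=
  hcomp.exists_isMaxOn hne (linA_cont A σ).continuousOn

lemma GA_eq_max (A : Finset (Fin n)) (σ : Fin n → Bool) {v : Fin n → ℝ} (hv : v ∈ V)
    (hmax : IsMaxOn (linA A σ) V v) : GA V A σ = linA A σ v :=
  IsGreatest.csSup_eq ⟨⟨v, hv, rfl⟩, by rintro _ ⟨u, hu, rfl⟩; exact hmax hu⟩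

lemma le_GA (hne : V.Nonempty) (hcomp : IsCompact V) {u : Fin n → ℝ} (hu : u ∈ V)
    (A : Finset (Fin n)) (σ : Fin n → Bool) : linA A σ u ≤ GA V A σ := by
  obtain ⟨v, hv, hmax⟩ := exists_maxA hne hcomp A σ
  rw [GA_eq_max A σ hv hmax]
  exact hmax hu

/-- Flip the `j`-th sign. -/
def flipB (j : Fin n) (σ : Fin n → Bool) : Fin n → Bool := Function.update σ j (!σ j)

lemma flipB_invol (j : Fin n) : Function.Involutive (flipB j) := by
  intro σ
  funext i
  by_cases h : i = j
  · subst h; simp [flipB]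
  · simp [flipB, Function.update_of_ne h]

lemma sum_flipB (j : Fin n) (F : (Fin n → Bool) → ℝ) :
    ∑ σ : Fin n → Bool, F (flipB j σ) = ∑ σ : Fin n → Bool, F σ :=
  Equiv.sum_comp ((flipB_invol j).toPerm _) F

lemma sgn_flipB_self (j : Fin n) (σ : Fin n → Bool) : sgn (flipB j σ j) = - sgn (σ j) := by
  simp only [flipB, Function.update_self]
  cases σ j <;> simp [sgn]

lemma linA_flipB (C : Finset (Fin n)) {j : Fin n} (hj : j ∉ C) (σ : Fin n → Bool)
    (v : Fin n → ℝ) : linA C (flipB j σ) v = linA C σ v :=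
  Finset.sum_congr rfl fun i hi => by
    rw [flipB, Function.update_of_ne (by rintro rfl; exact hj hi)]

end Aux18

section Aux18b

variable {n : ℕ} {V : Set (Fin n → ℝ)}

lemma sum_GA_insert (hne : V.Nonempty) (hcomp : IsCompact V) (j : Fin n) (C : Finset (Fin n)) :
    ∑ σ : Fin n → Bool, GA V C σ ≤ ∑ σ : Fin n → Bool, GA V (insert j C) σ := by
  by_cases hj : j ∈ C
  · rw [Finset.insert_eq_self.2 hj]
  have key : ∀ σ, GA V C σ ≤ (GA V (insert j C) σ + GA V (insert j C) (flipB j σ)) / 2 := by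
    intro σ
    obtain ⟨v, hv, hmax⟩ := exists_maxA hne hcomp C σ
    rw [GA_eq_max C σ hv hmax]
    have h1 : linA (insert j C) σ v ≤ GA V (insert j C) σ := le_GA hne hcomp hv _ _
    have h2 : linA (insert j C) (flipB j σ) v ≤ GA V (insert j C) (flipB j σ) :=
      le_GA hne hcomp hv _ _
    have e1 : linA (insert j C) σ v = sgn (σ j) * v j + linA C σ v := Finset.sum_insert hj
    have e2 : linA (insert j C) (flipB j σ) v
        = sgn (flipB j σ j) * v j + linA C (flipB j σ) v := Finset.sum_insert hj
    have e3 : linA C (flipB j σ) v = linA C σ v := linA_flipB C hj σ v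
    have e4 : sgn (flipB j σ j) = - sgn (σ j) := sgn_flipB_self j σ
    rw [e1] at h1
    rw [e2, e3, e4] at h2
    linarith
  calc ∑ σ : Fin n → Bool, GA V C σ
      ≤ ∑ σ : Fin n → Bool, (GA V (insert j C) σ + GA V (insert j C) (flipB j σ)) / 2 :=
        Finset.sum_le_sum fun σ _ => key σ
    _ = ((∑ σ : Fin n → Bool, GA V (insert j C) σ)
          + ∑ σ : Fin n → Bool, GA V (insert j C) (flipB j σ)) / 2 := by
        rw [← Finset.sum_div, Finset.sum_add_distrib]
    _ = ∑ σ : Fin n → Bool, GA V (insert j C) σ := by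
        rw [sum_flipB j (GA V (insert j C))]; ring

lemma sum_GA_mono (hne : V.Nonempty) (hcomp : IsCompact V) {A B : Finset (Fin n)}
    (hAB : A ⊆ B) : ∑ σ : Fin n → Bool, GA V A σ ≤ ∑ σ : Fin n → Bool, GA V B σ := by
  classical
  have h : ∀ s : Finset (Fin n),
      ∑ σ : Fin n → Bool, GA V A σ ≤ ∑ σ : Fin n → Bool, GA V (A ∪ s) σ := by
    intro s
    induction s using Finset.induction_on with
    | empty => simp
    | @insert j s hj ih =>
        rw [Finset.union_insert]
        exact ih.trans (sum_GA_insert hne hcomp j (A ∪ s))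
  have := h (B \ A)
  rwa [Finset.union_sdiff_of_subset hAB] at this

end Aux18b

section Aux18c

variable {n : ℕ} {V : Set (Fin n → ℝ)}

lemma radSet_eq (V : Set (Fin n → ℝ)) (A : Finset (Fin n)) :
    radSet V A = (∑ σ : Fin n → Bool, GA V A σ) / 2 ^ n := by
  classical
  set S : ({i // i ∈ A} → Bool) → ℝ := fun τ =>
    sSup ((fun v : Fin n → ℝ => ∑ i ∈ A.attach, sgn (τ i) * v i.1) '' V) with hS
  have hres : ∀ σ : Fin n → Bool, GA V A σ = S (fun i => σ i.1) := by
    intro σ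
    have hfun : (fun v : Fin n → ℝ => ∑ i ∈ A.attach, sgn (σ i.1) * v i.1) = linA A σ := by
      funext v
      rw [linA]
      exact Finset.sum_attach A (fun i => sgn (σ i) * v i)
    show sSup (linA A σ '' V)
        = sSup ((fun v : Fin n → ℝ => ∑ i ∈ A.attach, sgn (σ i.1) * v i.1) '' V)
    rw [hfun]
  have hAle : A.card ≤ n := by simpa using Finset.card_le_univ A
  have hcardk : Fintype.card ({i : Fin n // ¬ i ∈ A} → Bool) = 2 ^ (n - A.card) := by
    simp [Fintype.card_fun, Fintype.card_subtype_compl, Fintype.card_coe]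
  have hsum : ∑ σ : Fin n → Bool, GA V A σ = (2 : ℝ) ^ (n - A.card) * ∑ τ, S τ := by
    rw [Finset.sum_congr rfl fun σ _ => hres σ]
    rw [← Equiv.sum_comp (Equiv.piEquivPiSubtypeProd (fun i : Fin n => i ∈ A)
      (fun _ => Bool)).symm (fun σ : Fin n → Bool => S (fun i => σ i.1))]
    have hp : ∀ p : ({i : Fin n // i ∈ A} → Bool) × ({i : Fin n // ¬ i ∈ A} → Bool),
        S (fun i : {i // i ∈ A} =>
          ((Equiv.piEquivPiSubtypeProd (fun i : Fin n => i ∈ A) (fun _ => Bool)).symm p) i.1)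
        = S p.1 := by
      intro p
      congr 1
      funext i
      simp [Equiv.piEquivPiSubtypeProd]
    rw [Finset.sum_congr rfl fun p _ => hp p]
    calc (∑ p : ({i : Fin n // i ∈ A} → Bool) × ({i : Fin n // ¬ i ∈ A} → Bool), S p.1)
        = ∑ τ, ∑ _ρ : ({i : Fin n // ¬ i ∈ A} → Bool), S τ := by rw [Fintype.sum_prod_type]
      _ = ∑ τ, (2 : ℝ) ^ (n - A.card) * S τ := by
          refine Finset.sum_congr rfl fun τ _ => ?_
          rw [Finset.sum_const, Finset.card_univ, hcardk, nsmul_eq_mul]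
          push_cast
          ring
      _ = (2 : ℝ) ^ (n - A.card) * ∑ τ, S τ := by rw [Finset.mul_sum]
  have hcard' : (2 : ℝ) ^ n = 2 ^ A.card * 2 ^ (n - A.card) := by
    rw [← pow_add]
    congr 1
    omega
  have hrad : radSet V A = (∑ τ, S τ) / 2 ^ A.card := rfl
  rw [hrad, hsum, hcard']
  have h1 : (0:ℝ) < 2 ^ A.card := by positivity
  have h2 : (0:ℝ) < 2 ^ (n - A.card) := by positivity
  field_simp

end Aux18c

section Aux18d

variable {n : ℕ} {V : Set (Fin n → ℝ)}

/-- Clause weights: `W A i = E_σ[σ_i · (vmax A σ)_i]` for `i ∈ A`, else 0. -/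
noncomputable def WW (vmax : Finset (Fin n) → (Fin n → Bool) → (Fin n → ℝ))
    (A : Finset (Fin n)) (i : Fin n) : ℝ :=
  if i ∈ A then (∑ σ : Fin n → Bool, sgn (σ i) * vmax A σ i) / 2 ^ n else 0

variable {vmax : Finset (Fin n) → (Fin n → Bool) → (Fin n → ℝ)}

lemma WW_nonneg (hvmem : ∀ A σ, vmax A σ ∈ V)
    (hvmax : ∀ A σ, IsMaxOn (linA A σ) V (vmax A σ))
    (A : Finset (Fin n)) (i : Fin n) : 0 ≤ WW vmax A i := by
  unfold WW
  split
  case isFalse => exact le_refl 0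
  case isTrue hi =>
    apply div_nonneg _ (by positivity)
    have pair : ∀ σ : Fin n → Bool,
        0 ≤ sgn (σ i) * vmax A σ i + sgn (flipB i σ i) * vmax A (flipB i σ) i := by
      intro σ
      set u := vmax A σ with hu
      set w := vmax A (flipB i σ) with hw
      have h1 : linA A σ w ≤ linA A σ u := hvmax A σ (hvmem A (flipB i σ))
      have h2 : linA A (flipB i σ) u ≤ linA A (flipB i σ) w := hvmax A (flipB i σ) (hvmem A σ)
      have hsplit : ∀ (τ : Fin n → Bool) (x : Fin n → ℝ),
          linA A τ x = sgn (τ i) * x i + ∑ j ∈ A.erase i, sgn (τ j) * x j := by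
        intro τ x
        rw [linA, ← Finset.add_sum_erase A (fun j => sgn (τ j) * x j) hi]
      have herase : ∀ x : Fin n → ℝ,
          ∑ j ∈ A.erase i, sgn (flipB i σ j) * x j = ∑ j ∈ A.erase i, sgn (σ j) * x j := by
        intro x
        refine Finset.sum_congr rfl fun j hj => ?_
        rw [flipB, Function.update_of_ne (Finset.ne_of_mem_erase hj)]
      rw [hsplit, hsplit] at h1
      rw [hsplit, hsplit, herase, herase, sgn_flipB_self] at h2
      rw [sgn_flipB_self]
      set s := sgn (σ i)
      linarith
    have h2 : (2 : ℝ) * ∑ σ : Fin n → Bool, sgn (σ i) * vmax A σ i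
        = ∑ σ : Fin n → Bool, (sgn (σ i) * vmax A σ i
            + sgn (flipB i σ i) * vmax A (flipB i σ) i) := by
      rw [Finset.sum_add_distrib, sum_flipB i (fun σ => sgn (σ i) * vmax A σ i)]
      ring
    nlinarith [Finset.sum_nonneg fun σ (_ : σ ∈ Finset.univ) => pair σ]

lemma sum_WW_le (hne : V.Nonempty) (hcomp : IsCompact V)
    (hvmem : ∀ A σ, vmax A σ ∈ V)
    (A A' : Finset (Fin n)) : ∑ i ∈ A', WW vmax A i ≤ radSet V A' := by
  classical
  have h1 : ∑ i ∈ A', WW vmax A i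
      = (∑ σ : Fin n → Bool, linA (A' ∩ A) σ (vmax A σ)) / 2 ^ n := by
    unfold WW
    rw [Finset.sum_ite_mem, ← Finset.sum_div]
    congr 1
    rw [Finset.sum_comm]
    rfl
  rw [h1, radSet_eq]
  have h2 : ∑ σ : Fin n → Bool, linA (A' ∩ A) σ (vmax A σ)
      ≤ ∑ σ : Fin n → Bool, GA V A' σ := by
    calc ∑ σ : Fin n → Bool, linA (A' ∩ A) σ (vmax A σ)
        ≤ ∑ σ : Fin n → Bool, GA V (A' ∩ A) σ :=
          Finset.sum_le_sum fun σ _ => le_GA hne hcomp (hvmem A σ) _ _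
      _ ≤ ∑ σ : Fin n → Bool, GA V A' σ :=
          sum_GA_mono hne hcomp (Finset.inter_subset_left)
  gcongr

end Aux18d

section Aux18e

variable {n : ℕ} {V : Set (Fin n → ℝ)}
variable {vmax : Finset (Fin n) → (Fin n → Bool) → (Fin n → ℝ)}

lemma sum_WW_self (hvmem : ∀ A σ, vmax A σ ∈ V)
    (hvmax : ∀ A σ, IsMaxOn (linA A σ) V (vmax A σ))
    (A : Finset (Fin n)) : ∑ i ∈ A, WW vmax A i = radSet V A := by
  classical
  have h1 : ∑ i ∈ A, WW vmax A i
      = (∑ σ : Fin n → Bool, linA A σ (vmax A σ)) / 2 ^ n := by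
    unfold WW
    rw [Finset.sum_ite_mem, Finset.inter_self, ← Finset.sum_div]
    congr 1
    rw [Finset.sum_comm]
    rfl
  rw [h1, radSet_eq]
  congr 1
  exact Finset.sum_congr rfl fun σ _ => (GA_eq_max A σ (hvmem A σ) (hvmax A σ)).symm
end Aux18e

/-- For nonempty compact V ⊆ ℝⁿ, the Rademacher complexity
function φ satisfies φ(∅) = 0, is monotone, fractionally subadditive, and is
consequently an XOS set function. -/
theorem stmt18 {n : ℕ} (V : Set (Fin n → ℝ)) (hne : V.Nonempty) (hcomp : IsCompact V) :
    radSet V ∅ = 0 ∧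
    (∀ A B : Finset (Fin n), A ⊆ B → radSet V A ≤ radSet V B) ∧
    (∀ (A : Finset (Fin n)) (m : ℕ) (β : Fin m → ℝ) (B : Fin m → Finset (Fin n)),
      (∀ j, 0 ≤ β j) → (∀ i ∈ A, 1 ≤ ∑ j, if i ∈ B j then β j else 0) →
      radSet V A ≤ ∑ j, β j * radSet V (B j)) ∧
    (∃ (m : ℕ) (w : Fin (m + 1) → Fin n → ℝ), (∀ c i, 0 ≤ w c i) ∧
      ∀ A : Finset (Fin n), radSet V A = Finset.univ.sup' Finset.univ_nonempty
        (fun c => ∑ i ∈ A, w c i)) := by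
  classical
  choose vmax hvmem hvmax using fun (A : Finset (Fin n)) (σ : Fin n → Bool) =>
    exists_maxA hne hcomp A σ
  have hW0 : ∀ A i, 0 ≤ WW vmax A i := WW_nonneg hvmem hvmax
  have hWself : ∀ A, ∑ i ∈ A, WW vmax A i = radSet V A := sum_WW_self hvmem hvmax
  have hWle : ∀ A A', ∑ i ∈ A', WW vmax A i ≤ radSet V A' := sum_WW_le hne hcomp hvmem
  refine ⟨?_, ?_, ?_, ?_⟩
  · -- φ(∅) = 0
    rw [radSet_eq]
    have hz : ∀ σ : Fin n → Bool, GA V ∅ σ = 0 := by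
      intro σ
      unfold GA
      have hfun : linA (∅ : Finset (Fin n)) σ = fun _ => (0 : ℝ) := by
        funext v; simp [linA]
      rw [hfun, Set.Nonempty.image_const hne 0, csSup_singleton]
    simp [hz]
  · -- monotone
    intro A B hAB
    rw [radSet_eq, radSet_eq]
    have := sum_GA_mono hne hcomp hAB (V := V)
    gcongr
  · -- fractionally subadditive
    intro A m β B hβ hcov
    rw [← hWself A]
    calc ∑ i ∈ A, WW vmax A i
        ≤ ∑ i ∈ A, (∑ j, if i ∈ B j then β j else 0) * WW vmax A i := by
          refine Finset.sum_le_sum fun i hi => ?_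
          nth_rewrite 1 [← one_mul (WW vmax A i)]
          exact mul_le_mul_of_nonneg_right (hcov i hi) (hW0 A i)
      _ = ∑ j, ∑ i ∈ A, (if i ∈ B j then β j else 0) * WW vmax A i := by
          simp_rw [Finset.sum_mul]
          rw [Finset.sum_comm]
      _ ≤ ∑ j, β j * radSet V (B j) := by
          refine Finset.sum_le_sum fun j _ => ?_
          have heq : ∑ i ∈ A, (if i ∈ B j then β j else 0) * WW vmax A i
              = β j * ∑ i ∈ A ∩ B j, WW vmax A i := by
            rw [Finset.mul_sum, ← Finset.sum_ite_mem]
            refine Finset.sum_congr rfl fun i _ => ?_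
            split <;> simp
          rw [heq]
          have hle : ∑ i ∈ A ∩ B j, WW vmax A i ≤ radSet V (B j) := by
            calc ∑ i ∈ A ∩ B j, WW vmax A i ≤ ∑ i ∈ B j, WW vmax A i :=
                Finset.sum_le_sum_of_subset_of_nonneg Finset.inter_subset_right
                  (fun i _ _ => hW0 A i)
              _ ≤ radSet V (B j) := hWle A (B j)
          exact mul_le_mul_of_nonneg_left hle (hβ j)
  · -- XOS
    have hcard : Fintype.card (Finset (Fin n)) = 2 ^ n - 1 + 1 := by
      rw [Fintype.card_finset, Fintype.card_fin, Nat.sub_add_cancel Nat.one_le_two_pow]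
    set e := (Fintype.equivFinOfCardEq hcard).symm with he
    refine ⟨2 ^ n - 1, fun c i => WW vmax (e c) i,
      fun c i => hW0 (e c) i, fun A => ?_⟩
    apply le_antisymm
    · rw [← hWself A]
      have h := Finset.le_sup' (f := fun c => ∑ i ∈ A, WW vmax (e c) i)
        (Finset.mem_univ (e.symm A))
      exact le_trans (le_of_eq (by simp)) h
    · exact Finset.sup'_le _ _ fun c _ => hWle (e c) A
end

section
/- Let f : 2^{[n]} → ℝ be an XOS function. Then there exists a finite set V ⊆ ℝⁿ such that for every A ⊆ [n], f(A) = E_{σ}[ max_{v∈V} Σ_{i∈A} σ_i v_i ], where σ is uniform over {−1,1}^A. That is, every XOS function is the (unnormalized) Rademacher complexity function of some finite set of vectors. -/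
open Finset

/-- Every XOS set function on 2^{[n]} is the (unnormalized)
Rademacher complexity function of some finite set of vectors V ⊆ ℝⁿ. -/
theorem stmt19 {n : ℕ} (f : Finset (Fin n) → ℝ)
    (hf : ∃ (m : ℕ) (w : Fin (m + 1) → Fin n → ℝ), (∀ c i, 0 ≤ w c i) ∧
      ∀ A : Finset (Fin n),
        f A = Finset.univ.sup' Finset.univ_nonempty (fun c => ∑ i ∈ A, w c i)) :
    ∃ (V : Finset (Fin n → ℝ)) (hV : V.Nonempty),
      ∀ A : Finset (Fin n),
        f A = (∑ σ : {i // i ∈ A} → Bool,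
          V.sup' hV (fun v => ∑ i ∈ A.attach, sgn (σ i) * v i.1)) / 2 ^ A.card := by
  obtain ⟨m, w, hw, hfw⟩ := hf
  set V : Finset (Fin n → ℝ) :=
    Finset.image (fun p : Fin (m + 1) × (Fin n → Bool) =>
      fun i => sgn (p.2 i) * w p.1 i) Finset.univ with hVdef
  have hV : V.Nonempty := Finset.Nonempty.image ⟨(0, fun _ => true), Finset.mem_univ _⟩ _
  refine ⟨V, hV, fun A => ?_⟩
  have key : ∀ σ : {i // i ∈ A} → Bool,
      V.sup' hV (fun v => ∑ i ∈ A.attach, sgn (σ i) * v i.1) = f A := by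
    intro σ
    apply le_antisymm
    · apply Finset.sup'_le
      intro v hv
      simp only [hVdef, Finset.mem_image] at hv
      obtain ⟨⟨c, s⟩, -, rfl⟩ := hv
      have : (∑ i ∈ A.attach, sgn (σ i) * (sgn (s i.1) * w c i.1)) ≤ ∑ i ∈ A.attach, w c i.1 := by
        apply Finset.sum_le_sum
        intro i _
        have h1 : sgn (σ i) * sgn (s i.1) ≤ 1 := by
          unfold sgn; split <;> split <;> norm_num
        calc sgn (σ i) * (sgn (s i.1) * w c i.1) = (sgn (σ i) * sgn (s i.1)) * w c i.1 := by ring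
          _ ≤ 1 * w c i.1 := mul_le_mul_of_nonneg_right h1 (hw c i.1)
          _ = w c i.1 := one_mul _
      refine this.trans ?_
      rw [Finset.sum_attach A (fun i => w c i), hfw A]
      exact Finset.le_sup' (fun c => ∑ i ∈ A, w c i) (Finset.mem_univ c)
    · obtain ⟨c, -, hc⟩ := Finset.exists_mem_eq_sup' Finset.univ_nonempty
        (fun c => ∑ i ∈ A, w c i)
      rw [hfw A, hc]
      classical
      set s : Fin n → Bool := fun i => if h : i ∈ A then σ ⟨i, h⟩ else true with hs
      have hmem : (fun i => sgn (s i) * w c i) ∈ V := by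
        simp only [hVdef, Finset.mem_image]
        exact ⟨(c, s), Finset.mem_univ _, rfl⟩
      have := Finset.le_sup' (fun v => ∑ i ∈ A.attach, sgn (σ i) * v i.1) hmem
      refine le_trans (le_of_eq ?_) this
      rw [← Finset.sum_attach A (fun i => w c i)]
      apply Finset.sum_congr rfl
      intro i _
      have hsi : s i.1 = σ i := by simp [hs, i.2]
      have hsq : sgn (σ i) * sgn (σ i) = 1 := by unfold sgn; split <;> norm_num
      show w c i.1 = sgn (σ i) * (sgn (s i.1) * w c i.1)
      rw [hsi, ← mul_assoc, hsq, one_mul]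
  simp only [key, Finset.sum_const, Finset.card_univ]
  rw [Fintype.card_fun, Fintype.card_bool]
  simp [Fintype.card_coe, mul_comm]
end
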